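/- Let d ≥ 1, let Q₀ be a fixed real d×d matrix with all row sums zero, let μ : ℝ → ℝ be continuous, and let q : ℝ → ℝ^d be continuous with q_1(t) + ⋯ + q_d(t) = 0 for all t. Set u(t) := ∫₀ᵗ μ(τ)dτ, q^{(1)}(t) := ∫₀ᵗ q(τ)dτ and q^{(n+1)}(t) := ∫₀ᵗ μ(τ)·q^{(n)}(τ) dτ. Suppose M : ℝ → Mat(d,ℝ) satisfies M(0) = I and M′(t) = M(t)·(μ(t)·Q₀ + C_{q(t)}) for all t ≥ 0. Then for every t ≥ 0 the series Σ_{n≥1} C_{q^{(n)}(t)}·Q₀^{n−1} converges and M(t) = exp(u(t)·Q₀) + Σ_{n=1}^∞ C_{q^{(n)}(t)}·Q₀^{n−1}, where each summand C_{q^{(n)}(t)}·Q₀^{n−1} is an equal-rows matrix with zero trace; in particular M(t) − exp(u(t)·Q₀) is an equal-rows matrix with zero trace. -/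

import Mathlib

open Matrix

/-- `eqRows d x` is the `d × d` real matrix all of whose rows equal the row vector `x`. -/
def eqRows (d : ℕ) (x : Fin d → ℝ) : Matrix (Fin d) (Fin d) ℝ :=
  Matrix.of fun _ j => x j

set_option maxHeartbeats 2000000 in
/-- for the Cauchy problem `M′(t) = M(t)·(μ(t)·Q₀ + C_{q(t)})`, `M(0) = I`,
with `Q₀` of zero row sums, `μ` continuous, and `q` continuous with entry sum zero, and the
iterated vectors `q⁽¹⁾(t) = ∫₀ᵗ q`, `q⁽ⁿ⁺¹⁾(t) = ∫₀ᵗ μ·q⁽ⁿ⁾`, the series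
`Σ_{n≥1} C_{q⁽ⁿ⁾(t)}·Q₀^{n−1}` converges, and
`M(t) = exp(u(t)·Q₀) + Σ_{n≥1} C_{q⁽ⁿ⁾(t)}·Q₀^{n−1}`, where each summand — and hence the
difference `M(t) − exp(u(t)·Q₀)` — is an equal-rows matrix with zero trace. -/
theorem stmt14 (d : ℕ) (hd : 1 ≤ d) (Q0 : Matrix (Fin d) (Fin d) ℝ)
    (hQ0 : ∀ i, ∑ j, Q0 i j = 0)
    (μ : ℝ → ℝ) (hμ : Continuous μ)
    (q : ℝ → Fin d → ℝ) (hq : Continuous q) (hq0 : ∀ t, ∑ i, q t i = 0)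
    (qit : ℕ → ℝ → Fin d → ℝ)
    (hq1 : ∀ t, qit 1 t = ∫ τ in (0:ℝ)..t, q τ)
    (hqrec : ∀ n, 1 ≤ n → ∀ t, qit (n + 1) t = ∫ τ in (0:ℝ)..t, μ τ • qit n τ)
    (M : ℝ → Matrix (Fin d) (Fin d) ℝ) (hM0 : M 0 = 1)
    (hM : ∀ t, 0 ≤ t → ∀ i j,
      HasDerivAt (fun s => M s i j) ((M t * (μ t • Q0 + eqRows d (q t))) i j) t)
    (t : ℝ) (ht : 0 ≤ t) :
    ∃ S : Matrix (Fin d) (Fin d) ℝ,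
      HasSum (fun n : ℕ => eqRows d (qit (n + 1) t) * Q0 ^ n) S ∧
      M t = NormedSpace.exp ((∫ τ in (0:ℝ)..t, μ τ) • Q0) + S ∧
      (∀ n : ℕ, ∃ c : Fin d → ℝ, (∑ i, c i) = 0 ∧
        eqRows d (qit (n + 1) t) * Q0 ^ n = eqRows d c) ∧
      (∃ c : Fin d → ℝ, (∑ i, c i) = 0 ∧
        M t - NormedSpace.exp ((∫ τ in (0:ℝ)..t, μ τ) • Q0) = eqRows d c) := by
  classical
  letI : SeminormedRing (Matrix (Fin d) (Fin d) ℝ) := Matrix.linftyOpSemiNormedRing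
  letI : NormedRing (Matrix (Fin d) (Fin d) ℝ) := Matrix.linftyOpNormedRing
  letI : NormedAlgebra ℝ (Matrix (Fin d) (Fin d) ℝ) := Matrix.linftyOpNormedAlgebra
  set u : ℝ → ℝ := fun s => ∫ τ in (0:ℝ)..s, μ τ with hu_def
  have hu' : ∀ s, HasDerivAt u (μ s) s := fun s =>
    intervalIntegral.integral_hasDerivAt_right (hμ.intervalIntegrable _ _)
      (hμ.stronglyMeasurableAtFilter _ _) hμ.continuousAt
  set E : ℝ → Matrix (Fin d) (Fin d) ℝ := fun s => NormedSpace.exp (u s • Q0) with hE_def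
  have hE : ∀ s, HasDerivAt E (μ s • (E s * Q0)) s := by
    intro s
    have h1 := hasDerivAt_exp_smul_const (𝕂 := ℝ) Q0 (u s)
    have := h1.scomp s (hu' s)
    exact this
  -- continuous linear maps
  let rowCL : Fin d → (Matrix (Fin d) (Fin d) ℝ →L[ℝ] (Fin d → ℝ)) := fun i =>
    LinearMap.toContinuousLinearMap
      { toFun := fun A => A i, map_add' := fun _ _ => rfl, map_smul' := fun _ _ => rfl }
  have hrowCL : ∀ i A, rowCL i A = A i := fun _ _ => rfl
  let W : Matrix (Fin d) (Fin d) ℝ → ((Fin d → ℝ) →L[ℝ] (Fin d → ℝ)) := fun A =>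
    LinearMap.toContinuousLinearMap A.vecMulLinear
  have hW : ∀ A x, W A x = x ᵥ* A := fun A x => Matrix.vecMulLinear_apply A x
  let sumL : (Fin d → ℝ) →L[ℝ] ℝ := LinearMap.toContinuousLinearMap
    { toFun := fun x => ∑ j, x j, map_add' := by intro x y; simp [Finset.sum_add_distrib],
      map_smul' := by intro c x; simp [Finset.mul_sum] }
  have hsumL : ∀ x, sumL x = ∑ j, x j := fun _ => rfl
  let eqRowsCL : (Fin d → ℝ) →L[ℝ] Matrix (Fin d) (Fin d) ℝ := LinearMap.toContinuousLinearMap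
    { toFun := fun x => eqRows d x, map_add' := by intro x y; ext i j; simp [eqRows],
      map_smul' := by intro c x; ext i j; simp [eqRows] }
  have heqRowsCL : ∀ x, eqRowsCL x = eqRows d x := fun _ => rfl
  -- qit basics
  have hqit1 : qit 1 = fun s => ∫ τ in (0:ℝ)..s, q τ := funext hq1
  have hqcont : ∀ n : ℕ, Continuous (qit (n+1)) := by
    intro n
    induction n with
    | zero =>
      rw [hqit1]
      exact intervalIntegral.continuous_primitive (fun a b => hq.intervalIntegrable a b) 0
    | succ m ih =>
      have h2 : qit (m+2) = fun s => ∫ τ in (0:ℝ)..s, μ τ • qit (m+1) τ :=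
        funext (hqrec (m+1) (by omega))
      rw [h2]
      exact intervalIntegral.continuous_primitive
        (fun a b => (hμ.smul ih).intervalIntegrable a b) 0
  have hqd1 : ∀ s, HasDerivAt (qit 1) (q s) s := by
    intro s
    rw [hqit1]
    exact intervalIntegral.integral_hasDerivAt_right (hq.intervalIntegrable _ _)
      (hq.stronglyMeasurableAtFilter _ _) hq.continuousAt
  have hqdS : ∀ n s, HasDerivAt (qit (n+2)) (μ s • qit (n+1) s) s := by
    intro n s
    have h2 : qit (n+2) = fun s => ∫ τ in (0:ℝ)..s, μ τ • qit (n+1) τ :=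
      funext (hqrec (n+1) (by omega))
    rw [h2]
    exact intervalIntegral.integral_hasDerivAt_right
      ((hμ.smul (hqcont n)).intervalIntegrable _ _)
      ((hμ.smul (hqcont n)).stronglyMeasurableAtFilter _ _) (hμ.smul (hqcont n)).continuousAt
  have hqz : ∀ n : ℕ, qit (n+1) 0 = 0 := by
    intro n
    cases n with
    | zero => rw [hq1 0, intervalIntegral.integral_same]
    | succ m => rw [hqrec (m+1) (by omega) 0, intervalIntegral.integral_same]
  -- bounds
  obtain ⟨K0, hK0⟩ := (isCompact_Icc (a := (0:ℝ)) (b := t)).exists_bound_of_continuousOn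
    hq.continuousOn
  set K := max K0 0 with hK_def
  have hK : ∀ s ∈ Set.Icc (0:ℝ) t, ‖q s‖ ≤ K := fun s hs => (hK0 s hs).trans (le_max_left _ _)
  have hKnn : 0 ≤ K := le_max_right _ _
  obtain ⟨B0, hB0⟩ := (isCompact_Icc (a := (0:ℝ)) (b := t)).exists_bound_of_continuousOn
    hμ.continuousOn
  set B := max B0 0 with hB_def
  have hB : ∀ s ∈ Set.Icc (0:ℝ) t, ‖μ s‖ ≤ B := fun s hs => (hB0 s hs).trans (le_max_left _ _)
  have hBnn : 0 ≤ B := le_max_right _ _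
  have hbnd : ∀ n : ℕ, ∀ s ∈ Set.Icc (0:ℝ) t,
      ‖qit (n+1) s‖ ≤ K * B^n * s^(n+1) / (n.factorial) := by
    intro n
    induction n with
    | zero =>
      intro s hs
      rw [hq1 s]
      have h1 : ∀ x ∈ Set.uIoc (0:ℝ) s, ‖q x‖ ≤ K := by
        intro x hx
        rw [Set.uIoc_of_le hs.1] at hx
        exact hK x ⟨le_of_lt hx.1, hx.2.trans hs.2⟩
      have := intervalIntegral.norm_integral_le_of_norm_le_const h1
      rw [sub_zero, abs_of_nonneg hs.1] at this
      simpa using this.trans (le_of_eq (by ring))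
    | succ m ih =>
      intro s hs
      rw [hqrec (m+1) (by omega) s]
      have hsub : Set.Icc (0:ℝ) s ⊆ Set.Icc (0:ℝ) t := Set.Icc_subset_Icc le_rfl hs.2
      have hcont : Continuous fun τ => μ τ • qit (m+1) τ := hμ.smul (hqcont m)
      calc ‖∫ τ in (0:ℝ)..s, μ τ • qit (m+1) τ‖
          ≤ ∫ τ in (0:ℝ)..s, ‖μ τ • qit (m+1) τ‖ :=
            intervalIntegral.norm_integral_le_integral_norm hs.1
        _ ≤ ∫ τ in (0:ℝ)..s, B * (K * B^m * τ^(m+1) / (m.factorial)) := by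
            have hcp : Continuous fun τ : ℝ => B * (K * B^m * τ^(m+1) / (m.factorial)) := by
              fun_prop
            apply intervalIntegral.integral_mono_on hs.1
              (hcont.norm.intervalIntegrable _ _) (hcp.intervalIntegrable _ _)
            intro x hx
            rw [norm_smul]
            exact mul_le_mul (hB x (hsub hx)) (ih x (hsub hx)) (norm_nonneg _) hBnn
        _ = B * (K * B^m / (m.factorial)) * (s^(m+2) / (m+2)) := by
            have : ∀ τ : ℝ, B * (K * B^m * τ^(m+1) / (m.factorial))
                = (B * (K * B^m / (m.factorial))) * τ^(m+1) := by intro τ; ring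
            simp only [this, intervalIntegral.integral_const_mul, integral_pow]
            push_cast
            ring
        _ ≤ K * B^(m+1) * s^(m+2) / ((m+1).factorial) := by
            have hmf : (0:ℝ) < (m.factorial : ℝ) := by
              exact_mod_cast m.factorial_pos
            have e1 : B * (K * B^m / (m.factorial)) * (s^(m+2) / (m+2))
                = (K * B^(m+1) * s^(m+2)) / ((m+2) * (m.factorial : ℝ)) := by
              field_simp
              ring
            have hsn : (0:ℝ) ≤ s := hs.1
            rw [e1, Nat.factorial_succ]
            push_cast
            apply div_le_div_of_nonneg_left
            · exact mul_nonneg (mul_nonneg hKnn (pow_nonneg hBnn _)) (pow_nonneg hsn _)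
            · positivity
            · nlinarith [hmf]
  -- operator norm bound for vecMul
  set CL := ‖W Q0‖ with hCL_def
  have hCLnn : 0 ≤ CL := norm_nonneg _
  have hvecQ : ∀ x : Fin d → ℝ, ‖x ᵥ* Q0‖ ≤ CL * ‖x‖ := by
    intro x
    have := (W Q0).le_opNorm x
    rwa [hW] at this
  have hvecQn : ∀ (n : ℕ) (x : Fin d → ℝ), ‖x ᵥ* Q0 ^ n‖ ≤ CL ^ n * ‖x‖ := by
    intro n
    induction n with
    | zero => intro x; simp [Matrix.vecMul_one]
    | succ m ih =>
      intro x
      have h1 : x ᵥ* Q0 ^ (m+1) = (x ᵥ* Q0 ^ m) ᵥ* Q0 := by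
        rw [Matrix.vecMul_vecMul, ← pow_succ]
      rw [h1]
      calc ‖(x ᵥ* Q0 ^ m) ᵥ* Q0‖ ≤ CL * ‖x ᵥ* Q0 ^ m‖ := hvecQ _
        _ ≤ CL * (CL ^ m * ‖x‖) := by
            exact mul_le_mul_of_nonneg_left (ih x) hCLnn
        _ = CL ^ (m+1) * ‖x‖ := by ring
  -- the vector series
  set v : ℕ → Fin d → ℝ := fun n => qit (n+1) t ᵥ* Q0 ^ n with hv_def
  have hvb : ∀ n, ‖v n‖ ≤ (K * t) * ((B * CL * t)^n / n.factorial) := by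
    intro n
    calc ‖v n‖ ≤ CL ^ n * ‖qit (n+1) t‖ := hvecQn n _
      _ ≤ CL ^ n * (K * B^n * t^(n+1) / n.factorial) := by
          exact mul_le_mul_of_nonneg_left (hbnd n t ⟨ht, le_rfl⟩) (pow_nonneg hCLnn n)
      _ = (K * t) * ((B * CL * t)^n / n.factorial) := by
          rw [mul_pow, mul_pow]
          field_simp
          ring
  have hsummable : Summable v :=
    Summable.of_norm_bounded ((Real.summable_pow_div_factorial (B*CL*t)).mul_left (K*t)) hvb
  obtain ⟨ρ, hvsum⟩ : ∃ r : Fin d → ℝ, HasSum v r := ⟨_, hsummable.hasSum⟩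
  -- row sums of the coefficient matrix vanish
  have hAz : ∀ s k, ∑ j, (μ s • Q0 + eqRows d (q s)) k j = 0 := by
    intro s k
    simp only [Matrix.add_apply, Matrix.smul_apply, smul_eq_mul, eqRows, Matrix.of_apply,
      Finset.sum_add_distrib, ← Finset.mul_sum, hQ0 k, hq0 s, mul_zero, add_zero]
  have hz : ∀ s i, ∑ j, (M s * (μ s • Q0 + eqRows d (q s))) i j = 0 := by
    intro s i
    simp only [Matrix.mul_apply]
    rw [Finset.sum_comm]
    simp only [← Finset.mul_sum, hAz, mul_zero, Finset.sum_const_zero]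
  have hσ : ∀ i, ∀ s ∈ Set.Icc (0:ℝ) t, (∑ j, M s i j) = 1 := by
    intro i s hs
    have hder0 : ∀ x ∈ Set.Ico (0:ℝ) t,
        HasDerivWithinAt (fun s' => ∑ j, M s' i j) 0 (Set.Ici x) x := by
      intro x hx
      have h := HasDerivAt.fun_sum (fun j (_ : j ∈ Finset.univ) => hM x hx.1 i j)
      rw [hz x i] at h
      exact h.hasDerivWithinAt
    have hcont : ContinuousOn (fun s' => ∑ j, M s' i j) (Set.Icc 0 t) := by
      intro x hx
      exact (HasDerivAt.fun_sum
        (fun j (_ : j ∈ Finset.univ) => hM x hx.1 i j)).continuousAt.continuousWithinAt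
    have := constant_of_has_deriv_right_zero hcont hder0 s hs
    rw [this, hM0]
    simp [Matrix.one_apply]
  -- derivative of the rows of M on [0,t]
  have hrowMA : ∀ s i, (M s * (μ s • Q0 + eqRows d (q s))) i
      = μ s • ((fun k => M s i k) ᵥ* Q0) + (∑ k, M s i k) • q s := by
    intro s i
    funext j
    simp only [Matrix.mul_apply, Matrix.add_apply, Matrix.smul_apply, smul_eq_mul, eqRows,
      Matrix.of_apply, Pi.add_apply, Pi.smul_apply, Matrix.vecMul, dotProduct,
      mul_add, Finset.sum_add_distrib, Finset.mul_sum, Finset.sum_mul]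
    congr 1
    exact Finset.sum_congr rfl (fun k _ => by ring)
  have hmider : ∀ i, ∀ s ∈ Set.Icc (0:ℝ) t,
      HasDerivAt (fun s' => (fun j => M s' i j))
        (μ s • ((fun k => M s i k) ᵥ* Q0) + q s) s := by
    intro i s hs
    have h := hasDerivAt_pi.2 (fun j => hM s hs.1 i j)
    rw [hrowMA s i, hσ i s hs, one_smul] at h
    exact h
  -- partial sums
  set p : ℕ → ℝ → (Fin d → ℝ) := fun n s => ∑ k ∈ Finset.range n, qit (k+1) s ᵥ* Q0 ^ k
    with hp_def
  have hpz : ∀ n, p n 0 = 0 := by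
    intro n
    simp [hp_def, hqz, Matrix.zero_vecMul]
  have hpcont : ∀ n, Continuous (p n) := by
    intro n
    apply continuous_finset_sum
    intro k _
    exact (W (Q0 ^ k)).continuous.comp (hqcont k) |>.congr (fun s => by rw [Function.comp_apply, hW])
  have hpQ : ∀ n s, p n s ᵥ* Q0 = ∑ k ∈ Finset.range n, qit (k+1) s ᵥ* Q0 ^ (k+1) := by
    intro n s
    have h1 : p n s ᵥ* Q0 = W Q0 (p n s) := (hW _ _).symm
    rw [h1, hp_def]
    simp only [map_sum]
    exact Finset.sum_congr rfl fun k _ => by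
      rw [hW, Matrix.vecMul_vecMul, ← pow_succ]
  have htermd : ∀ (k : ℕ) (s : ℝ), HasDerivAt (fun s' => qit (k+2) s' ᵥ* Q0 ^ (k+1))
      (μ s • (qit (k+1) s ᵥ* Q0 ^ (k+1))) s := by
    intro k s
    have h := (W (Q0 ^ (k+1))).hasFDerivAt.comp_hasDerivAt s (hqdS k s)
    simp only [Function.comp_def, hW, Matrix.smul_vecMul] at h
    exact h
  have hterm0 : ∀ s : ℝ, HasDerivAt (fun s' => qit 1 s' ᵥ* Q0 ^ 0) (q s ᵥ* Q0 ^ 0) s := by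
    intro s
    have h := (W (Q0 ^ 0)).hasFDerivAt.comp_hasDerivAt s (hqd1 s)
    simp only [Function.comp_def, hW] at h
    exact h
  have hpder : ∀ (m : ℕ) (s : ℝ), HasDerivAt (p (m+1))
      (q s + (μ s • (p (m+1) s ᵥ* Q0) - μ s • (qit (m+1) s ᵥ* Q0 ^ (m+1)))) s := by
    intro m s
    have h : HasDerivAt (fun s' => ∑ k ∈ Finset.range (m+1), qit (k+1) s' ᵥ* Q0 ^ k)
        (∑ k ∈ Finset.range (m+1),
          if k = 0 then q s ᵥ* Q0 ^ 0 else μ s • (qit k s ᵥ* Q0 ^ k)) s := by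
      apply HasDerivAt.fun_sum
      intro k _
      cases k with
      | zero => simpa using hterm0 s
      | succ l => simpa [if_neg (Nat.succ_ne_zero l)] using htermd l s
    have e1 : (∑ k ∈ Finset.range (m+1),
        if k = 0 then q s ᵥ* Q0 ^ 0 else μ s • (qit k s ᵥ* Q0 ^ k))
        = q s + (μ s • (p (m+1) s ᵥ* Q0) - μ s • (qit (m+1) s ᵥ* Q0 ^ (m+1))) := by
      rw [Finset.sum_range_succ']
      simp only [if_pos rfl, if_neg (Nat.succ_ne_zero _)]
      rw [hpQ, Finset.smul_sum]
      rw [Finset.sum_range_succ (fun k => μ s • (qit (k+1) s ᵥ* Q0 ^ (k+1))) m]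
      simp only [pow_zero, Matrix.vecMul_one]
      abel
    rw [e1] at h
    exact h
  have hrowmul : ∀ (X : Matrix (Fin d) (Fin d) ℝ) (i : Fin d), (X * Q0) i = X i ᵥ* Q0 := by
    intro X i
    funext j
    simp [Matrix.mul_apply, Matrix.vecMul, dotProduct]
  have hE0 : E 0 = 1 := by
    show NormedSpace.exp ((∫ τ in (0:ℝ)..(0:ℝ), μ τ) • Q0) = 1
    rw [intervalIntegral.integral_same, zero_smul, NormedSpace.exp_zero]
  -- Gronwall setup
  set Cst := B * CL + 1 with hCst_def
  have hCstpos : (0:ℝ) < Cst := by positivity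
  set Aconst := (Real.exp (Cst * t) - 1) / Cst with hA_def
  have hAnn : 0 ≤ Aconst := by
    apply div_nonneg _ (le_of_lt hCstpos)
    have h1 : (1:ℝ) ≤ Real.exp (Cst * t) := by
      rw [← Real.exp_zero]
      exact Real.exp_le_exp.2 (by positivity)
    linarith
  set ε : ℕ → ℝ := fun m => B * CL^(m+1) * (K * B^m * t^(m+1) / m.factorial) with hε_def
  have hεlim : Filter.Tendsto (fun m => ε m * Aconst) Filter.atTop (nhds 0) := by
    have h1 : ∀ m, ε m * Aconst
        = (K * B * CL * t * Aconst) * ((B*CL*t)^m / m.factorial) := by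
      intro m
      have hmf : ((m.factorial : ℝ)) ≠ 0 := by
        exact_mod_cast m.factorial_pos.ne'
      simp only [hε_def, mul_pow]
      field_simp
      ring
    have h2 := (Real.summable_pow_div_factorial (B*CL*t)).tendsto_atTop_zero
    have h3 := h2.const_mul (K * B * CL * t * Aconst)
    simp only [mul_zero] at h3
    simpa only [h1] using h3
  have hrowlim : ∀ i : Fin d, (fun j => M t i j) - E t i = ρ := by
    intro i
    have hEi : ∀ s, HasDerivAt (fun s' => E s' i) (μ s • (E s i ᵥ* Q0)) s := by
      intro s
      have h := (rowCL i).hasFDerivAt.comp_hasDerivAt s (hE s)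
      simp only [Function.comp_def, hrowCL, _root_.map_smul, hrowmul] at h
      exact h
    have key : ∀ m : ℕ, ‖(fun j => M t i j) - E t i - p (m+1) t‖ ≤ ε m * Aconst := by
      intro m
      set g : ℝ → (Fin d → ℝ) := fun s => (fun j => M s i j) - E s i - p (m+1) s with hg_def
      have hgd : ∀ s ∈ Set.Icc (0:ℝ) t, HasDerivAt g
          (μ s • (g s ᵥ* Q0) + μ s • (qit (m+1) s ᵥ* Q0 ^ (m+1))) s := by
        intro s hs
        have hraw := ((hmider i s hs).sub (hEi s)).sub (hpder m s)
        have e2 : (μ s • ((fun k => M s i k) ᵥ* Q0) + q s) - (μ s • (E s i ᵥ* Q0))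
            - (q s + (μ s • (p (m+1) s ᵥ* Q0) - μ s • (qit (m+1) s ᵥ* Q0 ^ (m+1))))
            = μ s • (g s ᵥ* Q0) + μ s • (qit (m+1) s ᵥ* Q0 ^ (m+1)) := by
          have hsub : g s ᵥ* Q0
              = (fun k => M s i k) ᵥ* Q0 - E s i ᵥ* Q0 - p (m+1) s ᵥ* Q0 := by
            show ((fun j => M s i j) - E s i - p (m+1) s) ᵥ* Q0 = _
            rw [Matrix.sub_vecMul, Matrix.sub_vecMul]
          rw [hsub]
          simp only [smul_sub]
          abel
        rw [e2] at hraw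
        exact hraw
      have hg0 : g 0 = 0 := by
        show (fun j => M 0 i j) - E 0 i - p (m+1) 0 = 0
        rw [hpz, hM0, hE0]
        funext j
        simp
      have hgc : ContinuousOn g (Set.Icc (0:ℝ) t) := by
        intro x hx
        exact (((hmider i x hx).continuousAt.sub
          (hEi x).continuousAt).sub (hpder m x).continuousAt).continuousWithinAt
      have hball : ∀ x ∈ Set.Ico (0:ℝ) t,
          ‖μ x • (g x ᵥ* Q0) + μ x • (qit (m+1) x ᵥ* Q0 ^ (m+1))‖ ≤ Cst * ‖g x‖ + ε m := by
        intro x hx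
        have hxI : x ∈ Set.Icc (0:ℝ) t := ⟨hx.1, hx.2.le⟩
        have h1 : ‖μ x • (g x ᵥ* Q0)‖ ≤ Cst * ‖g x‖ := by
          rw [norm_smul]
          calc ‖μ x‖ * ‖g x ᵥ* Q0‖ ≤ B * (CL * ‖g x‖) :=
              mul_le_mul (hB x hxI) (hvecQ _) (norm_nonneg _) hBnn
            _ = (B * CL) * ‖g x‖ := by ring
            _ ≤ Cst * ‖g x‖ := by
                apply mul_le_mul_of_nonneg_right _ (norm_nonneg _)
                rw [hCst_def]; linarith
        have h2 : ‖μ x • (qit (m+1) x ᵥ* Q0 ^ (m+1))‖ ≤ ε m := by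
          rw [norm_smul]
          have h3 : ‖qit (m+1) x‖ ≤ K * B^m * t^(m+1) / m.factorial := by
            refine (hbnd m x hxI).trans ?_
            gcongr
            all_goals first | exact hx.1 | exact hx.2.le | exact ht | positivity
          calc ‖μ x‖ * ‖qit (m+1) x ᵥ* Q0 ^ (m+1)‖
              ≤ B * (CL^(m+1) * (K * B^m * t^(m+1) / m.factorial)) := by
                apply mul_le_mul (hB x hxI) _ (norm_nonneg _) hBnn
                exact (hvecQn (m+1) _).trans
                  (mul_le_mul_of_nonneg_left h3 (pow_nonneg hCLnn _))
            _ = ε m := by rw [hε_def]; ring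
        calc ‖μ x • (g x ᵥ* Q0) + μ x • (qit (m+1) x ᵥ* Q0 ^ (m+1))‖
            ≤ ‖μ x • (g x ᵥ* Q0)‖ + ‖μ x • (qit (m+1) x ᵥ* Q0 ^ (m+1))‖ := norm_add_le _ _
          _ ≤ Cst * ‖g x‖ + ε m := add_le_add h1 h2
      have hb := norm_le_gronwallBound_of_norm_deriv_right_le (δ := 0) (K := Cst) (ε := ε m)
        hgc (fun x hx => (hgd x ⟨hx.1, hx.2.le⟩).hasDerivWithinAt) (by simp [hg0]) hball
        t ⟨ht, le_rfl⟩
      rw [gronwallBound_of_K_ne_0 hCstpos.ne'] at hb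
      calc ‖g t‖ ≤ 0 * Real.exp (Cst * (t - 0)) + ε m / Cst * (Real.exp (Cst * (t - 0)) - 1) := hb
        _ = ε m * Aconst := by rw [hA_def]; field_simp; simp only [sub_zero, zero_mul, zero_add]
    have hgl : Filter.Tendsto (fun m => (fun j => M t i j) - E t i - p (m+1) t)
        Filter.atTop (nhds 0) := squeeze_zero_norm key hεlim
    have hptend : Filter.Tendsto (fun m => p (m+1) t) Filter.atTop
        (nhds ((fun j => M t i j) - E t i)) := by
      have h := (tendsto_const_nhds
        (x := (fun j => M t i j) - E t i) (f := Filter.atTop (α := ℕ))).sub hgl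
      have h2 : (fun m => ((fun j => M t i j) - E t i)
          - (((fun j => M t i j) - E t i) - p (m+1) t)) = fun m => p (m+1) t := by
        funext m
        abel
      rw [h2, sub_zero] at h
      exact h
    have hptend2 : Filter.Tendsto (fun m => p (m+1) t) Filter.atTop (nhds ρ) := by
      have h0 := hvsum.tendsto_sum_nat
      have h1 := h0.comp (Filter.tendsto_add_atTop_nat 1)
      exact h1
    exact tendsto_nhds_unique hptend hptend2
  -- row-sum-zero facts
  have hsum_vecMulQ : ∀ y : Fin d → ℝ, ∑ j, (y ᵥ* Q0) j = 0 := by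
    intro y
    simp only [Matrix.vecMul, dotProduct]
    rw [Finset.sum_comm]
    simp only [← Finset.mul_sum, hQ0, mul_zero, Finset.sum_const_zero]
  have hsigv : ∀ n, ∑ j, v n j = 0 := by
    intro n
    cases n with
    | zero =>
      show ∑ j, (qit 1 t ᵥ* Q0 ^ 0) j = 0
      simp only [pow_zero, Matrix.vecMul_one]
      rw [hq1 t]
      have h := ContinuousLinearMap.intervalIntegral_comp_comm (μ := MeasureTheory.volume)
        sumL (hq.intervalIntegrable 0 t)
      calc ∑ j, (∫ τ in (0:ℝ)..t, q τ) j = sumL (∫ τ in (0:ℝ)..t, q τ) := (hsumL _).symm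
        _ = ∫ τ in (0:ℝ)..t, sumL (q τ) := h.symm
        _ = 0 := by
            rw [intervalIntegral.integral_congr (g := fun _ => (0:ℝ))
              (fun τ _ => by rw [hsumL, hq0])]
            simp
    | succ m =>
      show ∑ j, (qit (m+2) t ᵥ* Q0 ^ (m+1)) j = 0
      rw [show qit (m+2) t ᵥ* Q0 ^ (m+1) = (qit (m+2) t ᵥ* Q0 ^ m) ᵥ* Q0 from by
        rw [Matrix.vecMul_vecMul, ← pow_succ]]
      exact hsum_vecMulQ _
  have hsigr : ∑ j, ρ j = 0 := by
    have hj : ∀ j, HasSum (fun n => v n j) (ρ j) := fun j => Pi.hasSum.1 hvsum j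
    have h : HasSum (fun n => ∑ j, v n j) (∑ j, ρ j) := hasSum_sum (fun j _ => hj j)
    simp only [hsigv] at h
    exact h.unique hasSum_zero
  -- assemble
  have heqmul : ∀ (x : Fin d → ℝ) (A : Matrix (Fin d) (Fin d) ℝ),
      eqRows d x * A = eqRows d (x ᵥ* A) := by
    intro x A
    ext i j
    simp [eqRows, Matrix.mul_apply, Matrix.vecMul, dotProduct]
  have hEt : NormedSpace.exp ((∫ τ in (0:ℝ)..t, μ τ) • Q0) = E t := rfl
  have hmain : M t = NormedSpace.exp ((∫ τ in (0:ℝ)..t, μ τ) • Q0) + eqRows d ρ := by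
    rw [hEt]
    ext i j
    have h := congrFun (hrowlim i) j
    simp only [Pi.sub_apply] at h
    simp only [Matrix.add_apply, eqRows, Matrix.of_apply]
    linarith
  refine ⟨eqRows d ρ, ?_, hmain, ?_, ?_⟩
  · have h := eqRowsCL.hasSum hvsum
    simp only [heqRowsCL] at h
    have e : (fun n : ℕ => eqRows d (qit (n + 1) t) * Q0 ^ n) = fun n => eqRows d (v n) := by
      funext n
      rw [heqmul]
    rw [e]
    exact h
  · intro n
    exact ⟨v n, hsigv n, heqmul _ _⟩
  · refine ⟨ρ, hsigr, ?_⟩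
    rw [hmain, hEt]
    exact add_sub_cancel_left _ _
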